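/- For the sequence of complete graphs K_n on n vertices, the constant sequence x_n = 1/n is a critical sequence: for every 0 < ε < 1, liminf_n Z_{K_n}((1+ε)/n) = ∞ and limsup_n Z_{K_n}((1−ε)/n) < ∞. -/

import Mathlib

open Filter Topology

/-- A self-avoiding walk from `o` in the graph `G`, encoded as the (nonempty) list of
visited vertices: it starts at `o`, consecutive vertices are adjacent, and no vertex is
visited more than once.  A list of length `k+1` corresponds to a walk with `k` edges. -/
def IsSAWFrom {V : Type*} (G : SimpleGraph V) (o : V) (l : List V) : Prop :=
  l.head? = some o ∧ l.Chain' G.Adj ∧ l.Nodup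

/-- `sawCount G o k = |SAW_k(o,G)|`, the number of self-avoiding walks from `o` with
exactly `k` edges. -/
noncomputable def sawCount {V : Type*} (G : SimpleGraph V) (o : V) (k : ℕ) : ℕ :=
  Nat.card {l : List V // IsSAWFrom G o l ∧ l.length = k + 1}

/-- The partition function `Z_{o,G}(x) = Σ_k |SAW_k(o,G)| x^k`.  Since a self-avoiding
walk in a graph on `|V|` vertices has at most `|V| - 1` edges, the sum over
`k < |V|` captures all nonzero terms. -/
noncomputable def sawZ {V : Type*} [Fintype V] (G : SimpleGraph V) (o : V) (x : ℝ) : ℝ :=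
  ∑ k ∈ Finset.range (Fintype.card V), (sawCount G o k : ℝ) * x ^ k

/-- The expected length `L(x,o,G) = Z_{o,G}(x)⁻¹ Σ_k k |SAW_k(o,G)| x^k`. -/
noncomputable def sawL {V : Type*} [Fintype V] (G : SimpleGraph V) (o : V) (x : ℝ) : ℝ :=
  (sawZ G o x)⁻¹ *
    ∑ k ∈ Finset.range (Fintype.card V), (k : ℝ) * (sawCount G o k : ℝ) * x ^ k

/-- The number of pairs `(ω, ω')` of self-avoiding walks from `o`, with `k` resp. `j`
edges, whose vertex sets intersect exactly in `{o}`. -/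
noncomputable def sawPairCount {V : Type*} (G : SimpleGraph V) (o : V) (k j : ℕ) : ℕ :=
  Nat.card {p : List V × List V //
    (IsSAWFrom G o p.1 ∧ p.1.length = k + 1) ∧
    (IsSAWFrom G o p.2 ∧ p.2.length = j + 1) ∧
    {v | v ∈ p.1 ∧ v ∈ p.2} = {o}}

/-- The trivial-intersection probability
`I(x,o,G) = Z_{o,G}(x)⁻² Σ x^{|ω|+|ω'|}`, summed over pairs of self-avoiding walks
from `o` whose vertex sets meet only in `o`. -/
noncomputable def sawI {V : Type*} [Fintype V] (G : SimpleGraph V) (o : V) (x : ℝ) : ℝ :=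
  ((sawZ G o x) ^ 2)⁻¹ *
    ∑ k ∈ Finset.range (Fintype.card V), ∑ j ∈ Finset.range (Fintype.card V),
      (sawPairCount G o k j : ℝ) * x ^ (k + j)

/-- The finite-graph critical exponent `γ(x,o,G) = log Z_{o,G}(x) / log (L(x,o,G) + 1)`. -/
noncomputable def sawGamma {V : Type*} [Fintype V] (G : SimpleGraph V) (o : V) (x : ℝ) : ℝ :=
  Real.log (sawZ G o x) / Real.log (sawL G o x + 1)

/-- A graph is vertex-transitive if its automorphism group acts transitively on vertices. -/
def SimpleGraph.VertexTransitive {V : Type*} (G : SimpleGraph V) : Prop :=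
  ∀ u v : V, ∃ φ : G ≃g G, φ u = v

/-- A graph is `d`-regular: every vertex has exactly `d` neighbours. -/
def SawRegular {V : Type*} (G : SimpleGraph V) (d : ℕ) : Prop :=
  ∀ v : V, Nat.card (G.neighborSet v) = d

/-- `(x n)` is super-critical for the rooted family `(G n, o n)`:
`liminf_n Z_{o_n, G_n}(x_n) = ∞`, i.e. `Z` tends to infinity. -/
def SawSuperCritical {V : ℕ → Type*} [∀ n, Fintype (V n)]
    (G : ∀ n, SimpleGraph (V n)) (o : ∀ n, V n) (x : ℕ → ℝ) : Prop :=
  Tendsto (fun n => sawZ (G n) (o n) (x n)) atTop atTop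

/-- `(x n)` is sub-critical for the rooted family `(G n, o n)`:
`limsup_n Z_{o_n, G_n}(x_n) < ∞`, i.e. the sequence of partition functions is bounded. -/
def SawSubCritical {V : ℕ → Type*} [∀ n, Fintype (V n)]
    (G : ∀ n, SimpleGraph (V n)) (o : ∀ n, V n) (x : ℕ → ℝ) : Prop :=
  BddAbove (Set.range fun n => sawZ (G n) (o n) (x n))

/-- `(x n)` is critical: for every `0 < ε < 1`, `(x n (1+ε))` is super-critical and
`(x n (1-ε))` is sub-critical. -/
def SawCritical {V : ℕ → Type*} [∀ n, Fintype (V n)]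
    (G : ∀ n, SimpleGraph (V n)) (o : ∀ n, V n) (x : ℕ → ℝ) : Prop :=
  ∀ ε : ℝ, 0 < ε → ε < 1 →
    SawSuperCritical G o (fun n => x n * (1 + ε)) ∧
    SawSubCritical G o (fun n => x n * (1 - ε))

/-- `Z_{K_n}(x)` for the complete graph `K_n` on `n` vertices, rooted at an arbitrary
vertex (all choices agree by symmetry); junk value `0` for `n = 0`. -/
noncomputable def completeZ (n : ℕ) (x : ℝ) : ℝ :=
  if h : 0 < n then sawZ (⊤ : SimpleGraph (Fin n)) ⟨0, h⟩ x else 0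

/-- `L(x, K_n)` for the complete graph `K_n`; junk value `0` for `n = 0`. -/
noncomputable def completeL (n : ℕ) (x : ℝ) : ℝ :=
  if h : 0 < n then sawL (⊤ : SimpleGraph (Fin n)) ⟨0, h⟩ x else 0

/-- `I(x, K_n)` for the complete graph `K_n`; junk value `0` for `n = 0`. -/
noncomputable def completeI (n : ℕ) (x : ℝ) : ℝ :=
  if h : 0 < n then sawI (⊤ : SimpleGraph (Fin n)) ⟨0, h⟩ x else 0

/-- `γ(x, K_n)` for the complete graph `K_n`; junk value `0` for `n = 0`. -/
noncomputable def completeGamma (n : ℕ) (x : ℝ) : ℝ :=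
  if h : 0 < n then sawGamma (⊤ : SimpleGraph (Fin n)) ⟨0, h⟩ x else 0

/-- A non-backtracking walk in `G`, encoded as the list of visited vertices:
consecutive vertices are adjacent and `ω_{j+2} ≠ ω_j` for all `j`. -/
def IsNBWalk {V : Type*} (G : SimpleGraph V) (l : List V) : Prop :=
  l.Chain' G.Adj ∧ ∀ i, i + 2 < l.length → l[i]? ≠ l[i + 2]?

/-- The number of non-backtracking walks of length `t` from `u` to `v`. -/
noncomputable def nbCount {V : Type*} (G : SimpleGraph V) (u v : V) (t : ℕ) : ℕ :=
  Nat.card {l : List V //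
    IsNBWalk G l ∧ l.length = t + 1 ∧ l.head? = some u ∧ l.getLast? = some v}

/-- `p_t(u,v)`: the number of non-backtracking walks of length `t` from `u` to `v`
divided by `d(d-1)^{t-1}`, i.e. the probability that the non-backtracking random walk
on a `d`-regular graph started at `u` is at `v` at time `t`. -/
noncomputable def nbProb {V : Type*} (G : SimpleGraph V) (d : ℕ) (u v : V) (t : ℕ) : ℝ :=
  (nbCount G u v t : ℝ) / (d * ((d : ℝ) - 1) ^ (t - 1))

/-- The mixing time of the non-backtracking random walk on the `d`-regular graph `G`
with `N` vertices: the least `t ≥ 1` with `|p_t(u,v) - 1/N| ≤ 1/(2N)` for all `u, v`. -/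
noncomputable def nbMixingTime {V : Type*} [Fintype V] (G : SimpleGraph V) (d : ℕ) : ℕ :=
  sInf {t : ℕ | 1 ≤ t ∧ ∀ u v : V,
    |nbProb G d u v t - 1 / (Fintype.card V : ℝ)| ≤ 1 / (2 * (Fintype.card V : ℝ))}


section Aux

open Finset

private lemma saw_finite (n k : ℕ) (o : Fin n) :
    Finite {l : List (Fin n) // IsSAWFrom (⊤ : SimpleGraph (Fin n)) o l ∧ l.length = k + 1} := by
  apply Finite.of_injective
    (fun l : {l : List (Fin n) // IsSAWFrom (⊤ : SimpleGraph (Fin n)) o l ∧ l.length = k + 1} =>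
      (fun i : Fin (k + 1) => l.val[(i : ℕ)]?))
  rintro ⟨l, hl⟩ ⟨m, hm⟩ h
  refine Subtype.ext ?_
  show l = m
  apply List.ext_getElem (by rw [hl.2, hm.2])
  intro i hi hi'
  have hik : i < k + 1 := by rw [hl.2] at hi; exact hi
  have := congrFun h ⟨i, hik⟩
  simp only at this
  rwa [List.getElem?_eq_getElem hi, List.getElem?_eq_getElem hi', Option.some_inj] at this

private lemma sawCount_top_le (n : ℕ) (h : 0 < n) (o : Fin n) (k : ℕ) :
    sawCount (⊤ : SimpleGraph (Fin n)) o k ≤ n ^ k := by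
  classical
  have hinj : Function.Injective
      (fun l : {l : List (Fin n) // IsSAWFrom (⊤ : SimpleGraph (Fin n)) o l ∧ l.length = k + 1} =>
        (fun i : Fin k => l.val.getD (i + 1) o)) := by
    rintro ⟨l, hl, hlen⟩ ⟨m, hm, hmlen⟩ hfg
    refine Subtype.ext ?_
    show l = m
    apply List.ext_getElem (by omega)
    intro i hi hi'
    rcases Nat.eq_zero_or_pos i with rfl | hipos
    · have hne : l ≠ [] := by rintro rfl; simp at hlen
      have hne' : m ≠ [] := by rintro rfl; simp at hmlen
      have h1 := hl.1; rw [List.head?_eq_head hne] at h1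
      have h2 := hm.1; rw [List.head?_eq_head hne'] at h2
      rw [List.getElem_zero, List.getElem_zero]
      rw [Option.some_inj] at h1 h2
      rw [h1, h2]
    · obtain ⟨j, rfl⟩ := Nat.exists_eq_add_of_lt hipos
      simp only [Nat.zero_add] at *
      have hj : j < k := by omega
      have := congrFun hfg ⟨j, hj⟩
      simp only at this
      rwa [List.getD_eq_getElem l o (by omega), List.getD_eq_getElem m o (by omega)] at this
  calc sawCount (⊤ : SimpleGraph (Fin n)) o k
      ≤ Nat.card (Fin k → Fin n) := Nat.card_le_card_of_injective _ hinj
    _ = n ^ k := by simp [Nat.card_eq_fintype_card]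

private lemma descFactorial_le_sawCount_top (n : ℕ) (o : Fin n) (k : ℕ) :
    (n - 1).descFactorial k ≤ sawCount (⊤ : SimpleGraph (Fin n)) o k := by
  classical
  have hfin := saw_finite n k o
  have hcard : Fintype.card {v : Fin n // v ≠ o} = n - 1 := by
    rw [Fintype.card_subtype_compl]
    simp
  set Φ : (Fin k ↪ {v : Fin n // v ≠ o}) →
      {l : List (Fin n) // IsSAWFrom (⊤ : SimpleGraph (Fin n)) o l ∧ l.length = k + 1} :=
    fun f => ⟨o :: List.ofFn (fun i => (f i).val), by
      refine ⟨⟨rfl, ?_, ?_⟩, by simp⟩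
      · have hnd : (o :: List.ofFn (fun i => (f i).val)).Nodup := by
          rw [List.nodup_cons]
          constructor
          · intro hmem
            rw [List.mem_ofFn] at hmem
            obtain ⟨i, hi⟩ := hmem
            exact (f i).2 hi
          · rw [List.nodup_ofFn]
            intro a b hab
            exact f.injective (Subtype.ext hab)
        exact (hnd.isChain ).imp (fun a b hab => by simpa using hab)
      · rw [List.nodup_cons]
        constructor
        · intro hmem
          rw [List.mem_ofFn] at hmem
          obtain ⟨i, hi⟩ := hmem
          exact (f i).2 hi
        · rw [List.nodup_ofFn]
          intro a b hab
          exact f.injective (Subtype.ext hab)⟩ with hΦ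
  have hinj : Function.Injective Φ := by
    intro f g hfg
    rw [hΦ, Subtype.ext_iff] at hfg
    simp only [List.cons.injEq] at hfg
    ext i
    have := hfg.2
    have h2 : ∀ j : Fin k, (f j).val = (g j).val := by
      intro j
      have h3 := congrArg (fun l => l.getD j o) this
      simp only [List.getD_eq_getElem _ o (by simpa using j.2 : (j : ℕ) < (List.ofFn fun i => (f i).val).length),
        List.getD_eq_getElem _ o (by simpa using j.2 : (j : ℕ) < (List.ofFn fun i => (g i).val).length)] at h3
      rwa [List.getElem_ofFn, List.getElem_ofFn] at h3
    first
      | exact h2 i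
      | exact Subtype.ext (h2 i)
      | exact congrArg Fin.val (h2 i)
  calc (n - 1).descFactorial k
      = Nat.card (Fin k ↪ {v : Fin n // v ≠ o}) := by
        rw [Nat.card_eq_fintype_card, Fintype.card_embedding_eq, hcard, Fintype.card_fin]
    _ ≤ sawCount (⊤ : SimpleGraph (Fin n)) o k := Nat.card_le_card_of_injective _ hinj

private lemma pow_le_descFactorial' (n k : ℕ) : (n + 1 - k) ^ k ≤ n.descFactorial k := by
  induction k with
  | zero => simp
  | succ k ih =>
    rw [Nat.descFactorial_succ]
    have h1 : n + 1 - (k + 1) = n - k := by omega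
    calc (n + 1 - (k + 1)) ^ (k + 1) = (n - k) * (n - k) ^ k := by rw [h1, pow_succ']
      _ ≤ (n - k) * (n + 1 - k) ^ k :=
          Nat.mul_le_mul_left _ (Nat.pow_le_pow_left (by omega) k)
      _ ≤ (n - k) * n.descFactorial k := Nat.mul_le_mul_left _ ih

end Aux

/-- For the complete graphs `K_n`, the sequence `x_n = 1/n` is
critical: for every `0 < ε < 1`, `Z_{K_n}((1+ε)/n) → ∞` (liminf is infinite) and
`Z_{K_n}((1-ε)/n)` stays bounded (limsup is finite). -/
theorem complete_one_over_n_critical :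
    ∀ ε : ℝ, 0 < ε → ε < 1 →
      Tendsto (fun n : ℕ => completeZ n ((1 + ε) / n)) atTop atTop ∧
      BddAbove (Set.range fun n : ℕ => completeZ n ((1 - ε) / n)) := by
  intro ε hε0 hε1
  constructor
  · -- super-critical
    rw [tendsto_atTop]
    intro M
    obtain ⟨K, hK⟩ := exists_nat_ge M
    set N := K + ⌈(K : ℝ) * (1 + ε) / ε⌉₊ + 1 with hN
    filter_upwards [eventually_ge_atTop N] with n hn
    have hn0 : 0 < n := by omega
    have hnpos : (0 : ℝ) < n := by exact_mod_cast hn0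
    rw [completeZ, dif_pos hn0]
    set x := (1 + ε) / (n : ℝ) with hxdef
    have hx : 0 < x := div_pos (by linarith) hnpos
    have key : ∀ k ∈ Finset.range K,
        (1 : ℝ) ≤ (sawCount (⊤ : SimpleGraph (Fin n)) ⟨0, hn0⟩ k : ℝ) * x ^ k := by
      intro k hk
      have hkK : k < K := Finset.mem_range.mp hk
      have hkn : k ≤ n := by omega
      have hlownat : (n - k) ^ k ≤ sawCount (⊤ : SimpleGraph (Fin n)) ⟨0, hn0⟩ k := by
        refine le_trans ?_ (descFactorial_le_sawCount_top n ⟨0, hn0⟩ k)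
        have : n - 1 + 1 - k = n - k := by omega
        simpa [this] using pow_le_descFactorial' (n - 1) k
      have hlow : ((n - k : ℕ) : ℝ) ^ k
          ≤ (sawCount (⊤ : SimpleGraph (Fin n)) ⟨0, hn0⟩ k : ℝ) := by
        exact_mod_cast hlownat
      have hceil : (K : ℝ) * (1 + ε) / ε ≤ n := by
        refine le_trans (Nat.le_ceil _) ?_
        exact_mod_cast (by omega : ⌈(K : ℝ) * (1 + ε) / ε⌉₊ ≤ n)
      have hkr : (k : ℝ) < K := by exact_mod_cast hkK
      have h1 : (1 : ℝ) ≤ ((n - k : ℕ) : ℝ) * x := by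
        rw [Nat.cast_sub hkn, hxdef]
        rw [mul_div_assoc', le_div_iff₀ hnpos, one_mul]
        have hKe : (K : ℝ) * (1 + ε) ≤ n * ε := by
          rw [div_le_iff₀ hε0] at hceil
          linarith
        nlinarith
      calc (1 : ℝ) = 1 ^ k := (one_pow k).symm
        _ ≤ (((n - k : ℕ) : ℝ) * x) ^ k := pow_le_pow_left₀ zero_le_one h1 k
        _ = ((n - k : ℕ) : ℝ) ^ k * x ^ k := mul_pow _ _ _
        _ ≤ _ := mul_le_mul_of_nonneg_right hlow (pow_nonneg hx.le k)
    calc M ≤ (K : ℝ) := hK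
      _ = ∑ _k ∈ Finset.range K, (1 : ℝ) := by simp
      _ ≤ ∑ k ∈ Finset.range K,
            (sawCount (⊤ : SimpleGraph (Fin n)) ⟨0, hn0⟩ k : ℝ) * x ^ k :=
          Finset.sum_le_sum key
      _ ≤ ∑ k ∈ Finset.range (Fintype.card (Fin n)),
            (sawCount (⊤ : SimpleGraph (Fin n)) ⟨0, hn0⟩ k : ℝ) * x ^ k := by
          apply Finset.sum_le_sum_of_subset_of_nonneg
          · apply Finset.range_subset_range.2
            simp only [Fintype.card_fin]
            omega
          · intro k _ _
            positivity
      _ = sawZ (⊤ : SimpleGraph (Fin n)) ⟨0, hn0⟩ x := rfl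
  · -- sub-critical
    rw [bddAbove_def]
    refine ⟨1 / ε, ?_⟩
    rintro y ⟨n, rfl⟩
    rcases Nat.eq_zero_or_pos n with rfl | hn0
    · simp only [completeZ, dif_neg (lt_irrefl 0)]
      positivity
    · have hnpos : (0 : ℝ) < n := by exact_mod_cast hn0
      simp only [completeZ, dif_pos hn0]
      set x := (1 - ε) / (n : ℝ) with hxdef
      have hx : 0 ≤ x := div_nonneg (by linarith) hnpos.le
      have hr0 : (0 : ℝ) ≤ 1 - ε := by linarith
      have hr1 : (1 : ℝ) - ε < 1 := by linarith
      calc sawZ (⊤ : SimpleGraph (Fin n)) ⟨0, hn0⟩ x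
          = ∑ k ∈ Finset.range (Fintype.card (Fin n)),
              (sawCount (⊤ : SimpleGraph (Fin n)) ⟨0, hn0⟩ k : ℝ) * x ^ k := rfl
        _ ≤ ∑ k ∈ Finset.range n, (1 - ε) ^ k := by
            simp only [Fintype.card_fin]
            apply Finset.sum_le_sum
            intro k _
            have hc : (sawCount (⊤ : SimpleGraph (Fin n)) ⟨0, hn0⟩ k : ℝ) ≤ (n : ℝ) ^ k := by
              exact_mod_cast sawCount_top_le n hn0 ⟨0, hn0⟩ k
            calc (sawCount (⊤ : SimpleGraph (Fin n)) ⟨0, hn0⟩ k : ℝ) * x ^ k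
                ≤ (n : ℝ) ^ k * x ^ k :=
                  mul_le_mul_of_nonneg_right hc (pow_nonneg hx k)
              _ = ((n : ℝ) * x) ^ k := (mul_pow _ _ _).symm
              _ = (1 - ε) ^ k := by
                  rw [hxdef, mul_div_cancel₀ _ (ne_of_gt hnpos)]
        _ ≤ 1 / ε := by
            rw [geom_sum_eq (by linarith : (1 : ℝ) - ε ≠ 1), show (1 : ℝ) - ε - 1 = -ε by ring]
            have h1 : (0 : ℝ) ≤ (1 - ε) ^ n := pow_nonneg hr0 n
            have h2 : (1 - ε) ^ n ≤ 1 := pow_le_one₀ hr0 hr1.le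
            have key : ((1 - ε) ^ n - 1) / (-ε) = (1 - (1 - ε) ^ n) / ε := by
              rw [div_neg, ← neg_div]
              ring_nf
            rw [key]
            gcongr
            linarith
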